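/- For p ∈ V write φ_{K,p} for the function u ↦ ν(p−u) − ν(p), and for a dual face L ⊆ K and p ∈ V write φ_{L,p} for the function u ↦ ν_L(p−u) − ν_L(p). Then: (a) φ_{K,p} = φ_{K,p'} if and only if p = p'; (b) for dual faces L, L' and p, p' ∈ V, φ_{L,p} = φ_{L',p'} if and only if L = L' and p − p' ∈ H_L; and (c) φ_{K,p} ≠ φ_{L,p'} for every dual face L and all p, p' ∈ V. -/

import Mathlib

open Bornology

/-- The polyhedral asymmetric norm `ν(u) = max {ξ_k(u) : k ∈ K}`. -/
noncomputable def nu {V : Type*} [AddCommGroup V] [Module ℝ V] {m : ℕ}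
    (ξ : Fin (m + 1) → V →ₗ[ℝ] ℝ) (u : V) : ℝ :=
  Finset.univ.sup' Finset.univ_nonempty fun k => ξ k u

/-- `ν_L(u) = max {ξ_ℓ(u) : ℓ ∈ L}` (junk value `0` for `L = ∅`). -/
noncomputable def nuL {V : Type*} [AddCommGroup V] [Module ℝ V] {m : ℕ}
    (ξ : Fin (m + 1) → V →ₗ[ℝ] ℝ) (L : Finset (Fin (m + 1))) (u : V) : ℝ :=
  if h : L.Nonempty then L.sup' h fun ℓ => ξ ℓ u else 0

/-- `L ⊆ K` is a dual face if there is `v` with `ν(v) = 1` and `L = {k : ξ_k(v) = 1}`. -/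
def IsDualFace {V : Type*} [AddCommGroup V] [Module ℝ V] {m : ℕ}
    (ξ : Fin (m + 1) → V →ₗ[ℝ] ℝ) (L : Finset (Fin (m + 1))) : Prop :=
  ∃ v : V, nu ξ v = 1 ∧ ∀ k, k ∈ L ↔ ξ k v = 1

/-- `H_L = {u : ξ_k(u) = ξ_ℓ(u) for all k, ℓ ∈ L}`. -/
def HL {V : Type*} [AddCommGroup V] [Module ℝ V] {m : ℕ}
    (ξ : Fin (m + 1) → V →ₗ[ℝ] ℝ) (L : Finset (Fin (m + 1))) : Set V :=
  {u : V | ∀ k ∈ L, ∀ l ∈ L, ξ k u = ξ l u}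

section Aux
variable {V : Type*} [AddCommGroup V] [Module ℝ V] {m : ℕ}
  (ξ : Fin (m + 1) → V →ₗ[ℝ] ℝ)

lemma nuL_def {L : Finset (Fin (m + 1))} (h : L.Nonempty) (u : V) :
    nuL ξ L u = L.sup' h fun ℓ => ξ ℓ u := dif_pos h

lemma nu_eq_nuL (u : V) : nu ξ u = nuL ξ Finset.univ u := by
  rw [nuL_def ξ Finset.univ_nonempty]; rfl

lemma le_nuL {L : Finset (Fin (m + 1))} {k} (hk : k ∈ L) (u : V) :
    ξ k u ≤ nuL ξ L u := by
  rw [nuL_def ξ ⟨k, hk⟩]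
  exact Finset.le_sup' (fun ℓ => ξ ℓ u) hk

lemma nuL_le {L : Finset (Fin (m + 1))} (h : L.Nonempty) {u : V} {a : ℝ}
    (hb : ∀ k ∈ L, ξ k u ≤ a) : nuL ξ L u ≤ a := by
  rw [nuL_def ξ h]; exact Finset.sup'_le _ _ hb

lemma nuL_zero {L : Finset (Fin (m + 1))} (h : L.Nonempty) : nuL ξ L 0 = 0 := by
  obtain ⟨k, hk⟩ := h
  have h1 := le_nuL ξ hk (0 : V)
  have h2 := nuL_le ξ ⟨k, hk⟩ (u := (0 : V)) (a := 0) (fun l _ => by simp)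
  simp at h1
  linarith

lemma dualFace_nonempty {L : Finset (Fin (m + 1))} (h : IsDualFace ξ L) : L.Nonempty := by
  obtain ⟨v, hv, hL⟩ := h
  obtain ⟨k, -, hk⟩ := Finset.exists_mem_eq_sup' Finset.univ_nonempty fun k => ξ k v
  exact ⟨k, (hL k).mpr (by rw [← hk, ← nu, hv])⟩

lemma not_dualFace_univ (hpos : ∀ u : V, u ≠ 0 → 0 < nu ξ u) :
    ¬ IsDualFace ξ (Finset.univ : Finset (Fin (m + 1))) := by
  rintro ⟨v, hv, hL⟩
  have hvk : ∀ k, ξ k v = 1 := fun k => (hL k).mp (Finset.mem_univ k)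
  have hv0 : v ≠ 0 := by
    rintro rfl
    rw [nu_eq_nuL, nuL_zero ξ Finset.univ_nonempty] at hv
    norm_num at hv
  have h1 : nu ξ (-v) ≤ -1 := by
    rw [nu_eq_nuL]
    exact nuL_le ξ Finset.univ_nonempty (fun k _ => by simp [hvk k])
  have := hpos (-v) (neg_ne_zero.mpr hv0)
  linarith

/-- Core lemma: the functional equation forces `L ⊆ L'`. -/
lemma key_subset {L L' : Finset (Fin (m + 1))} (hL' : L'.Nonempty)
    (hfacet : ∀ k, ∃ u : V, ξ k u = 1 ∧ ∀ l, l ≠ k → ξ l u < 1)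
    {q : V} {c : ℝ}
    (h : ∀ w, nuL ξ L w = nuL ξ L' (q + w) + c) :
    L ⊆ L' := by
  intro k hk
  by_contra hk'
  obtain ⟨u, hu1, hu2⟩ := hfacet k
  set s : ℝ := L'.sup' hL' fun ℓ => ξ ℓ u with hs
  have hs1 : s < 1 := by
    rw [hs, Finset.sup'_lt_iff]
    exact fun l hl => hu2 l (fun e => hk' (e ▸ hl))
  set M : ℝ := nuL ξ L' q with hM
  set t : ℝ := max 1 ((M + c + 1) / (1 - s)) with ht
  have ht1 : (1:ℝ) ≤ t := le_max_left _ _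
  have ht0 : (0:ℝ) ≤ t := by linarith
  have h1 : t ≤ nuL ξ L (t • u) := by
    have := le_nuL ξ hk (t • u)
    simpa [hu1] using this
  have h2 : nuL ξ L' (q + t • u) ≤ M + t * s := by
    apply nuL_le ξ hL'
    intro l hl
    have e : ξ l (q + t • u) = ξ l q + t * ξ l u := by
      simp [map_add, map_smul, smul_eq_mul]
    rw [e]
    have b1 : ξ l q ≤ M := le_nuL ξ hl q
    have b2 : ξ l u ≤ s := by rw [hs]; exact Finset.le_sup' (fun ℓ => ξ ℓ u) hl
    nlinarith
  have h3 : t ≤ M + t * s + c := by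
    have := h (t • u)
    linarith
  have h5 : M + c + 1 ≤ t * (1 - s) := by
    have h6 : (M + c + 1) / (1 - s) ≤ t := le_max_right _ _
    have h7 : (0:ℝ) < 1 - s := by linarith
    calc M + c + 1 = ((M + c + 1) / (1 - s)) * (1 - s) := by field_simp
      _ ≤ t * (1 - s) := by nlinarith
  nlinarith

/-- Core lemma: with `L = L'`, the functional equation forces `ξ k q = -c` for `k ∈ L`. -/
lemma key_const {L : Finset (Fin (m + 1))}
    (hfacet : ∀ k, ∃ u : V, ξ k u = 1 ∧ ∀ l, l ≠ k → ξ l u < 1)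
    {q : V} {c : ℝ}
    (h : ∀ w, nuL ξ L w = nuL ξ L (q + w) + c)
    {k} (hk : k ∈ L) : ξ k q = -c := by
  obtain ⟨u, hu1, hu2⟩ := hfacet k
  have hL : L.Nonempty := ⟨k, hk⟩
  set C : ℝ := nuL ξ L q - ξ k q with hC
  have hC0 : 0 ≤ C := by
    have := le_nuL ξ hk q; rw [hC]; linarith
  set t : ℝ := L.sup' hL fun ℓ => (C + 1) / (1 - ξ ℓ u) with htdef
  have ht0 : (0:ℝ) ≤ t := by
    have := Finset.le_sup' (fun ℓ => (C + 1) / (1 - ξ ℓ u)) hk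
    rw [htdef]
    simp only [hu1] at this
    simpa only [sub_self, div_zero] using this
  have hbd : ∀ l ∈ L, ξ l q + t * ξ l u ≤ ξ k q + t := by
    intro l hl
    rcases eq_or_ne l k with rfl | hlk
    · rw [hu1]; linarith
    · have hd : (0:ℝ) < 1 - ξ l u := by linarith [hu2 l hlk]
      have htl : (C + 1) / (1 - ξ l u) ≤ t := by
        rw [htdef]; exact Finset.le_sup' (fun ℓ => (C + 1) / (1 - ξ ℓ u)) hl
      have h8 : C + 1 ≤ t * (1 - ξ l u) := by
        calc C + 1 = ((C + 1) / (1 - ξ l u)) * (1 - ξ l u) := by field_simp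
          _ ≤ t * (1 - ξ l u) := by nlinarith
      have h9 : ξ l q ≤ nuL ξ L q := le_nuL ξ hl q
      rw [hC] at h8
      nlinarith
  have hub : nuL ξ L (q + t • u) = ξ k q + t := by
    apply le_antisymm
    · apply nuL_le ξ hL
      intro l hl
      have e : ξ l (q + t • u) = ξ l q + t * ξ l u := by
        simp [map_add, map_smul, smul_eq_mul]
      rw [e]; exact hbd l hl
    · have := le_nuL ξ hk (q + t • u)
      simpa [map_add, map_smul, smul_eq_mul, hu1] using this
  have hlhs : nuL ξ L (t • u) = t := by
    apply le_antisymm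
    · apply nuL_le ξ hL
      intro l hl
      have e : ξ l (t • u) = t * ξ l u := by simp [map_smul, smul_eq_mul]
      rw [e]
      rcases eq_or_ne l k with rfl | hlk
      · rw [hu1]; linarith
      · nlinarith [hu2 l hlk]
    · have := le_nuL ξ hk (t • u)
      simpa [map_smul, smul_eq_mul, hu1] using this
  have := h (t • u)
  rw [hlhs, hub] at this
  linarith

/-- `ν_L(q + w) = c + ν_L(w)` when `ξ_k q = c` for all `k ∈ L`. -/
lemma nuL_add_const {L : Finset (Fin (m + 1))} (hL : L.Nonempty) {q : V} {c : ℝ}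
    (hq : ∀ k ∈ L, ξ k q = c) (w : V) :
    nuL ξ L (q + w) = c + nuL ξ L w := by
  apply le_antisymm
  · apply nuL_le ξ hL
    intro l hl
    have e : ξ l (q + w) = c + ξ l w := by rw [map_add, hq l hl]
    rw [e]
    have := le_nuL ξ hl w
    linarith
  · have : nuL ξ L w ≤ nuL ξ L (q + w) - c := by
      apply nuL_le ξ hL
      intro l hl
      have := le_nuL ξ hl (q + w)
      rw [map_add, hq l hl] at this
      linarith
    linarith

end Aux

/-- Writing `φ_{K,p}(u) = ν(p−u) − ν(p)` and, for a dual face `L`,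
`φ_{L,p}(u) = ν_L(p−u) − ν_L(p)`:
(a) `φ_{K,p} = φ_{K,p'}` iff `p = p'`;
(b) for dual faces `L, L'`, `φ_{L,p} = φ_{L',p'}` iff `L = L'` and `p − p' ∈ H_L`;
(c) `φ_{K,p} ≠ φ_{L,p'}` for every dual face `L` and all `p, p'`. -/

theorem horofunction_parametrization_injective
    {V : Type*} [NormedAddCommGroup V] [InnerProductSpace ℝ V] [FiniteDimensional ℝ V]
    {m : ℕ} (ξ : Fin (m + 1) → V →ₗ[ℝ] ℝ)
    (hfacet : ∀ k, ∃ u : V, ξ k u = 1 ∧ ∀ l, l ≠ k → ξ l u < 1)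
    (hpos : ∀ u : V, u ≠ 0 → 0 < nu ξ u) :
    (∀ p p' : V,
      ((fun u => nu ξ (p - u) - nu ξ p) = fun u => nu ξ (p' - u) - nu ξ p') ↔ p = p') ∧
    (∀ L L' : Finset (Fin (m + 1)), IsDualFace ξ L → IsDualFace ξ L' → ∀ p p' : V,
      ((fun u => nuL ξ L (p - u) - nuL ξ L p) =
          fun u => nuL ξ L' (p' - u) - nuL ξ L' p') ↔
        (L = L' ∧ p - p' ∈ HL ξ L)) ∧
    (∀ L : Finset (Fin (m + 1)), IsDualFace ξ L → ∀ p p' : V,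
      (fun u => nu ξ (p - u) - nu ξ p) ≠ fun u => nuL ξ L (p' - u) - nuL ξ L p') := by
  refine ⟨?_, ?_, ?_⟩
  · -- (a)
    intro p p'
    constructor
    · intro h
      by_contra hne
      have h1 := congrFun h p
      have h2 := congrFun h p'
      simp only [sub_self] at h1 h2
      have hz : nu ξ (0 : V) = 0 := by
        rw [nu_eq_nuL]; exact nuL_zero ξ Finset.univ_nonempty
      rw [hz] at h1 h2
      have hp1 := hpos (p - p') (sub_ne_zero.mpr hne)
      have hp2 := hpos (p' - p) (sub_ne_zero.mpr (Ne.symm hne))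
      linarith
    · rintro rfl; rfl
  · -- (b)
    intro L L' hLd hL'd p p'
    have hL : L.Nonempty := dualFace_nonempty ξ hLd
    have hL' : L'.Nonempty := dualFace_nonempty ξ hL'd
    constructor
    · intro h
      have hfun : ∀ w, nuL ξ L w =
          nuL ξ L' ((p' - p) + w) + (nuL ξ L p - nuL ξ L' p') := by
        intro w
        have hc := congrFun h (p - w)
        simp only [sub_sub_cancel] at hc
        have e : p' - (p - w) = (p' - p) + w := by abel
        rw [e] at hc
        linarith
      have hsub : L ⊆ L' := key_subset ξ hL' hfacet hfun
      have hfun' : ∀ w, nuL ξ L' w =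
          nuL ξ L ((p - p') + w) + (nuL ξ L' p' - nuL ξ L p) := by
        intro w
        have hc := hfun ((p - p') + w)
        have e : (p' - p) + ((p - p') + w) = w := by abel
        rw [e] at hc
        linarith
      have hsub' : L' ⊆ L := key_subset ξ hL hfacet hfun'
      have hLL : L = L' := le_antisymm hsub hsub'
      subst hLL
      refine ⟨rfl, ?_⟩
      intro k hk l hl
      have h1 := key_const ξ hfacet hfun hk
      have h2 := key_const ξ hfacet hfun hl
      have ek : ξ k (p - p') = -(ξ k (p' - p)) := by
        rw [← map_neg]; congr 1; abel
      have el : ξ l (p - p') = -(ξ l (p' - p)) := by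
        rw [← map_neg]; congr 1; abel
      rw [ek, el, h1, h2]
    · rintro ⟨rfl, hH⟩
      obtain ⟨k0, hk0⟩ := hL
      set c := ξ k0 (p - p') with hc
      have hq : ∀ k ∈ L, ξ k (p - p') = c := fun k hk => hH k hk k0 hk0
      funext u
      have e1 : nuL ξ L (p - u) = c + nuL ξ L (p' - u) := by
        have := nuL_add_const ξ ⟨k0, hk0⟩ hq (p' - u)
        have e : (p - p') + (p' - u) = p - u := by abel
        rwa [e] at this
      have e2 : nuL ξ L p = c + nuL ξ L p' := by
        have := nuL_add_const ξ ⟨k0, hk0⟩ hq p'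
        have e : (p - p') + p' = p := by abel
        rwa [e] at this
      rw [e1, e2]; ring
  · -- (c)
    intro L hLd p p' h
    have hL : L.Nonempty := dualFace_nonempty ξ hLd
    have hfun : ∀ w, nuL ξ Finset.univ w =
        nuL ξ L ((p' - p) + w) + (nuL ξ Finset.univ p - nuL ξ L p') := by
      intro w
      have hc := congrFun h (p - w)
      simp only [sub_sub_cancel, nu_eq_nuL] at hc
      have e : p' - (p - w) = (p' - p) + w := by abel
      rw [e] at hc
      linarith
    have hsub : (Finset.univ : Finset (Fin (m + 1))) ⊆ L := key_subset ξ hL hfacet hfun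
    have hLu : L = Finset.univ := Finset.eq_univ_of_forall fun k => hsub (Finset.mem_univ k)
    exact not_dualFace_univ ξ hpos (hLu ▸ hLd)
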